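/- Define γ : ℝ → ℝ⁴ by γ(s) = ((√(2−√2)/2)cos((√2+1)s), −(√(2−√2)/2)sin((√2+1)s), (√(2+√2)/2)cos((√2−1)s), (√(2+√2)/2)sin((√2−1)s)). Then for all s: |γ(s)|² = 1, |γ′(s)|² = 1, ⟨γ(s), γ′(s)⟩ = 0, |γ″(s)|² = 5, ⟨γ(s), γ″(s)⟩ = −1, and γ⁗(s) + 6γ″(s) + γ(s) = 0. -/

import Mathlib

open Real

noncomputable def vec4 (p q r t : ℝ) : EuclideanSpace ℝ (Fin 4) :=
  (WithLp.equiv 2 (Fin 4 → ℝ)).symm ![p, q, r, t]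

noncomputable def Gc (a b w m s : ℝ) : EuclideanSpace ℝ (Fin 4) :=
  vec4 (a * Real.cos (w * s)) (-a * Real.sin (w * s)) (b * Real.cos (m * s)) (b * Real.sin (m * s))

noncomputable def Gs (a b w m s : ℝ) : EuclideanSpace ℝ (Fin 4) :=
  vec4 (-(a * w) * Real.sin (w * s)) (-(a * w) * Real.cos (w * s))
    (-(b * m) * Real.sin (m * s)) (b * m * Real.cos (m * s))

lemma hd_cos (a ω s : ℝ) :
    HasDerivAt (fun t => a * Real.cos (ω * t)) (-(a * ω) * Real.sin (ω * s)) s := by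
  have h := ((Real.hasDerivAt_cos (ω * s)).comp s ((hasDerivAt_id s).const_mul ω)).const_mul a
  exact h.congr_deriv (by ring)

lemma hd_sin (a ω s : ℝ) :
    HasDerivAt (fun t => a * Real.sin (ω * t)) (a * ω * Real.cos (ω * s)) s := by
  have h := ((Real.hasDerivAt_sin (ω * s)).comp s ((hasDerivAt_id s).const_mul ω)).const_mul a
  exact h.congr_deriv (by ring)

lemma congr_d {f : ℝ → ℝ} {v v' s : ℝ} (h : HasDerivAt f v s) (hv : v = v') :
    HasDerivAt f v' s := hv ▸ h

lemma vec4_hasDerivAt {f1 f2 f3 f4 : ℝ → ℝ} {v1 v2 v3 v4 : ℝ} {s : ℝ}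
    (h1 : HasDerivAt f1 v1 s) (h2 : HasDerivAt f2 v2 s)
    (h3 : HasDerivAt f3 v3 s) (h4 : HasDerivAt f4 v4 s) :
    HasDerivAt (fun t => vec4 (f1 t) (f2 t) (f3 t) (f4 t)) (vec4 v1 v2 v3 v4) s := by
  have hp : HasDerivAt (fun t => (![f1 t, f2 t, f3 t, f4 t] : Fin 4 → ℝ))
      ![v1, v2, v3, v4] s := by
    rw [hasDerivAt_pi]
    intro i
    fin_cases i <;> simpa
  exact ((EuclideanSpace.equiv (Fin 4) ℝ).symm.toContinuousLinearMap.hasFDerivAt).comp_hasDerivAt s hp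

lemma Gc_hasDerivAt (a b w m s : ℝ) : HasDerivAt (Gc a b w m) (Gs a b w m s) s := by
  unfold Gc Gs
  exact vec4_hasDerivAt (hd_cos a w s)
    (congr_d (hd_sin (-a) w s) (by ring))
    (hd_cos b m s)
    (congr_d (hd_sin b m s) (by ring))

lemma Gs_hasDerivAt (a b w m s : ℝ) :
    HasDerivAt (Gs a b w m) (Gc (-(a * w ^ 2)) (-(b * m ^ 2)) w m s) s := by
  unfold Gc Gs
  exact vec4_hasDerivAt (congr_d (hd_sin (-(a * w)) w s) (by ring))
    (congr_d (hd_cos (-(a * w)) w s) (by ring))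
    (congr_d (hd_sin (-(b * m)) m s) (by ring))
    (congr_d (hd_cos (b * m) m s) (by ring))

lemma vec4_inner (p q r t p' q' r' t' : ℝ) :
    (inner ℝ (vec4 p q r t) (vec4 p' q' r' t') : ℝ) = p * p' + q * q' + r * r' + t * t' := by
  simp [vec4, PiLp.inner_apply, Fin.sum_univ_four]
  ring

lemma vec4_norm_sq (p q r t : ℝ) :
    ‖vec4 p q r t‖ ^ 2 = p ^ 2 + q ^ 2 + r ^ 2 + t ^ 2 := by
  rw [← real_inner_self_eq_norm_sq, vec4_inner]
  ring

theorem stmt_9 (γ : ℝ → EuclideanSpace ℝ (Fin 4))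
    (hγ : ∀ s, γ s = (WithLp.equiv 2 (Fin 4 → ℝ)).symm
      ![(Real.sqrt (2 - Real.sqrt 2) / 2) * Real.cos ((Real.sqrt 2 + 1) * s),
        -(Real.sqrt (2 - Real.sqrt 2) / 2) * Real.sin ((Real.sqrt 2 + 1) * s),
        (Real.sqrt (2 + Real.sqrt 2) / 2) * Real.cos ((Real.sqrt 2 - 1) * s),
        (Real.sqrt (2 + Real.sqrt 2) / 2) * Real.sin ((Real.sqrt 2 - 1) * s)]) :
    ∀ s : ℝ,
      ‖γ s‖ ^ 2 = 1 ∧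
      ‖iteratedDeriv 1 γ s‖ ^ 2 = 1 ∧
      inner ℝ (γ s) (iteratedDeriv 1 γ s) = (0 : ℝ) ∧
      ‖iteratedDeriv 2 γ s‖ ^ 2 = 5 ∧
      inner ℝ (γ s) (iteratedDeriv 2 γ s) = (-1 : ℝ) ∧
      iteratedDeriv 4 γ s + (6 : ℝ) • iteratedDeriv 2 γ s + γ s = 0 := by
  have ht : Real.sqrt 2 ^ 2 = 2 := Real.sq_sqrt (by norm_num)
  have htle : Real.sqrt 2 ≤ 2 := by nlinarith [Real.sqrt_nonneg 2]
  set a := Real.sqrt (2 - Real.sqrt 2) / 2 with hadef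
  set b := Real.sqrt (2 + Real.sqrt 2) / 2 with hbdef
  set w := Real.sqrt 2 + 1 with hwdef
  set m := Real.sqrt 2 - 1 with hmdef
  have ha : a ^ 2 = (2 - Real.sqrt 2) / 4 := by
    rw [hadef, div_pow, Real.sq_sqrt (by nlinarith)]
    norm_num
  have hb : b ^ 2 = (2 + Real.sqrt 2) / 4 := by
    rw [hbdef, div_pow, Real.sq_sqrt (by positivity)]
    norm_num
  have hγf : γ = Gc a b w m := funext fun s => (hγ s).trans rfl
  have d1 : deriv γ = Gs a b w m := by
    rw [hγf]; exact funext fun t => (Gc_hasDerivAt a b w m t).deriv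
  have d2 : deriv (Gs a b w m) = Gc (-(a * w ^ 2)) (-(b * m ^ 2)) w m :=
    funext fun t => (Gs_hasDerivAt a b w m t).deriv
  have d3 : deriv (Gc (-(a * w ^ 2)) (-(b * m ^ 2)) w m)
      = Gs (-(a * w ^ 2)) (-(b * m ^ 2)) w m :=
    funext fun t => (Gc_hasDerivAt _ _ w m t).deriv
  have d4 : deriv (Gs (-(a * w ^ 2)) (-(b * m ^ 2)) w m)
      = Gc (-(-(a * w ^ 2) * w ^ 2)) (-(-(b * m ^ 2) * m ^ 2)) w m :=
    funext fun t => (Gs_hasDerivAt _ _ w m t).deriv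
  have e1 : iteratedDeriv 1 γ = Gs a b w m := by rw [iteratedDeriv_one, d1]
  have e2 : iteratedDeriv 2 γ = Gc (-(a * w ^ 2)) (-(b * m ^ 2)) w m := by
    have : iteratedDeriv 2 γ = deriv (iteratedDeriv 1 γ) := iteratedDeriv_succ
    rw [this, e1, d2]
  have e3 : iteratedDeriv 3 γ = Gs (-(a * w ^ 2)) (-(b * m ^ 2)) w m := by
    have : iteratedDeriv 3 γ = deriv (iteratedDeriv 2 γ) := iteratedDeriv_succ
    rw [this, e2, d3]
  have e4 : iteratedDeriv 4 γ
      = Gc (-(-(a * w ^ 2) * w ^ 2)) (-(-(b * m ^ 2) * m ^ 2)) w m := by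
    have : iteratedDeriv 4 γ = deriv (iteratedDeriv 3 γ) := iteratedDeriv_succ
    rw [this, e3, d4]
  intro s
  have c1 : Real.sin (w * s) ^ 2 + Real.cos (w * s) ^ 2 = 1 := Real.sin_sq_add_cos_sq _
  have c2 : Real.sin (m * s) ^ 2 + Real.cos (m * s) ^ 2 = 1 := Real.sin_sq_add_cos_sq _
  refine ⟨?_, ?_, ?_, ?_, ?_, ?_⟩
  · rw [hγf]; unfold Gc; rw [vec4_norm_sq]
    linear_combination a ^ 2 * c1 + b ^ 2 * c2 + ha + hb
  · rw [e1]; unfold Gs; rw [vec4_norm_sq]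
    linear_combination (a * w) ^ 2 * c1 + (b * m) ^ 2 * c2 + w ^ 2 * ha + m ^ 2 * hb
  · rw [e1, hγf]; unfold Gc Gs; rw [vec4_inner]; ring
  · rw [e2]; unfold Gc; rw [vec4_norm_sq]
    linear_combination (a * w ^ 2) ^ 2 * c1 + (b * m ^ 2) ^ 2 * c2 + w ^ 4 * ha + m ^ 4 * hb
      + (2 - Real.sqrt 2 ^ 2) * ht
  · rw [e2, hγf]; unfold Gc; rw [vec4_inner]
    linear_combination (-(a ^ 2 * w ^ 2)) * c1 + (-(b ^ 2 * m ^ 2)) * c2 - w ^ 2 * ha - m ^ 2 * hb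
  · rw [e2, e4, hγf]
    unfold Gc vec4
    ext i
    fin_cases i
    · simp [WithLp.equiv_symm_apply, PiLp.toLp_apply, PiLp.add_apply, PiLp.smul_apply, smul_eq_mul]
      linear_combination (Real.sqrt (2 - Real.sqrt 2) / 2 * Real.cos (w * s))
        * (Real.sqrt 2 ^ 2 + 4 * Real.sqrt 2 + 2) * ht
    · simp [WithLp.equiv_symm_apply, PiLp.toLp_apply, PiLp.add_apply, PiLp.smul_apply, smul_eq_mul]
      linear_combination (-(Real.sqrt (2 - Real.sqrt 2) / 2) * Real.sin (w * s))
        * (Real.sqrt 2 ^ 2 + 4 * Real.sqrt 2 + 2) * ht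
    · simp [WithLp.equiv_symm_apply, PiLp.toLp_apply, PiLp.add_apply, PiLp.smul_apply, smul_eq_mul]
      linear_combination (Real.sqrt (2 + Real.sqrt 2) / 2 * Real.cos (m * s))
        * (Real.sqrt 2 ^ 2 - 4 * Real.sqrt 2 + 2) * ht
    · simp [WithLp.equiv_symm_apply, PiLp.toLp_apply, PiLp.add_apply, PiLp.smul_apply, smul_eq_mul]
      linear_combination (Real.sqrt (2 + Real.sqrt 2) / 2 * Real.sin (m * s))
        * (Real.sqrt 2 ^ 2 - 4 * Real.sqrt 2 + 2) * ht
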